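/- Under the hypotheses of the trilinear interpolation theorem, for all x₁, x₂, x₃ ∈ (X₁,X₂)_{θ,∞} and all t > 0 one has K(t, T(x₁,x₂,x₃), Y₁, Y₂) ≤ 3C₀ [ ‖x₁‖_{X₁} K(√t,x₂) K(√t,x₃) + K(√t,x₁)( ‖x₂‖_{X₁} K(√t,x₃) + ‖x₃‖_{X₁} K(√t,x₂) ) ], where K(·,xᵢ) = K(·,xᵢ,X₁,X₂). -/

import Mathlib

open MeasureTheory ENNReal
noncomputable section

/-- An extended-real-valued norm on an ambient real vector space; the associated
Banach space of an interpolation couple is the set where the norm is finite. -/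
structure ENormC (V : Type*) [AddCommGroup V] [Module ℝ V] where
  e : V → ℝ≥0∞
  e_zero : e 0 = 0
  e_add_le : ∀ v w, e (v + w) ≤ e v + e w
  e_smul : ∀ (c : ℝ) (v : V), e (c • v) = ‖c‖₊ * e v

variable {V : Type*} [AddCommGroup V] [Module ℝ V]

/-- The K-functional of the couple (X, Y). -/
noncomputable def Kfun (X Y : ENormC V) (t : ℝ≥0∞) (x : V) : ℝ≥0∞ :=
  ⨅ p : {p : V × V // p.1 + p.2 = x}, X.e p.1.1 + t * Y.e p.1.2

/-- The real interpolation norm of `(X,Y)_{θ,r}`, i.e. the `L^r((0,∞),dt/t)` norm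
of `t ↦ t^{-θ} K(t,x)`. -/
noncomputable def interpN (X Y : ENormC V) (θ : ℝ) (r : ℝ≥0∞) (x : V) : ℝ≥0∞ :=
  if r = ∞ then
    ⨆ t : {t : ℝ // 0 < t}, ENNReal.ofReal (t.1 ^ (-θ)) * Kfun X Y (ENNReal.ofReal t.1) x
  else
    (∫⁻ t in Set.Ioi (0 : ℝ),
        (ENNReal.ofReal (t ^ (-θ)) * Kfun X Y (ENNReal.ofReal t) x) ^ r.toReal *
          ENNReal.ofReal t⁻¹) ^ r.toReal⁻¹

/-! ### Auxiliary lemmas -/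

instance KfunNonempty (x : V) : Nonempty {p : V × V // p.1 + p.2 = x} :=
  ⟨⟨(x, 0), add_zero x⟩⟩

lemma Kfun_le (X Y : ENormC V) (t : ℝ≥0∞) {x a b : V} (h : a + b = x) :
    Kfun X Y t x ≤ X.e a + t * Y.e b :=
  iInf_le (fun p : {p : V × V // p.1 + p.2 = x} => X.e p.1.1 + t * Y.e p.1.2) ⟨(a, b), h⟩

lemma Kfun_le_left (X Y : ENormC V) (t : ℝ≥0∞) (x : V) : Kfun X Y t x ≤ X.e x := by
  simpa [Y.e_zero] using Kfun_le X Y t (add_zero x)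

lemma Kfun_le_right (X Y : ENormC V) (t : ℝ≥0∞) (x : V) : Kfun X Y t x ≤ t * Y.e x := by
  simpa [X.e_zero] using Kfun_le X Y t (zero_add x)

lemma e_sub_bound (X : ENormC V) {x a b : V} (h : a + b = x) : X.e b ≤ X.e x + X.e a := by
  have hb : b = x + (-1 : ℝ) • a := by
    rw [neg_one_smul, ← h]; abel
  calc X.e b = X.e (x + (-1 : ℝ) • a) := by rw [← hb]
    _ ≤ X.e x + X.e ((-1 : ℝ) • a) := X.e_add_le _ _
    _ = X.e x + X.e a := by rw [X.e_smul]; norm_num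

lemma Kfun_add_le (X Y : ENormC V) (t : ℝ≥0∞) (x y : V) :
    Kfun X Y t (x + y) ≤ Kfun X Y t x + Kfun X Y t y := by
  have key : ∀ (p : {p : V × V // p.1 + p.2 = x}) (q : {q : V × V // q.1 + q.2 = y}),
      Kfun X Y t (x + y) ≤ (X.e p.1.1 + t * Y.e p.1.2) + (X.e q.1.1 + t * Y.e q.1.2) := by
    intro p q
    obtain ⟨⟨pa, pb⟩, hp⟩ := p
    obtain ⟨⟨qa, qb⟩, hq⟩ := q
    simp only at hp hq ⊢
    refine le_trans (Kfun_le X Y t (a := pa + qa) (b := pb + qb) ?_) ?_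
    · subst hp; subst hq; abel
    · calc X.e (pa + qa) + t * Y.e (pb + qb)
          ≤ (X.e pa + X.e qa) + t * (Y.e pb + Y.e qb) := by
            gcongr
            · exact X.e_add_le _ _
            · exact Y.e_add_le _ _
        _ = _ := by ring
  calc Kfun X Y t (x + y)
      ≤ ⨅ (p : {p : V × V // p.1 + p.2 = x}) (q : {q : V × V // q.1 + q.2 = y}),
          ((X.e p.1.1 + t * Y.e p.1.2) + (X.e q.1.1 + t * Y.e q.1.2)) :=
        le_iInf fun p => le_iInf fun q => key p q
    _ = Kfun X Y t x + Kfun X Y t y := by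
        rw [Kfun, Kfun, ENNReal.iInf_add]
        exact iInf_congr fun p => by rw [ENNReal.add_iInf]

lemma Kfun_sum8 (X Y : ENormC V) (t : ℝ≥0∞) (w1 w2 w3 w4 w5 w6 w7 w8 : V) :
    Kfun X Y t (w1 + w2 + w3 + w4 + w5 + w6 + w7 + w8) ≤
      Kfun X Y t w1 + Kfun X Y t w2 + Kfun X Y t w3 + Kfun X Y t w4 +
      Kfun X Y t w5 + Kfun X Y t w6 + Kfun X Y t w7 + Kfun X Y t w8 := by
  refine le_trans (Kfun_add_le _ _ _ _ _) (add_le_add ?_ le_rfl)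
  refine le_trans (Kfun_add_le _ _ _ _ _) (add_le_add ?_ le_rfl)
  refine le_trans (Kfun_add_le _ _ _ _ _) (add_le_add ?_ le_rfl)
  refine le_trans (Kfun_add_le _ _ _ _ _) (add_le_add ?_ le_rfl)
  refine le_trans (Kfun_add_le _ _ _ _ _) (add_le_add ?_ le_rfl)
  refine le_trans (Kfun_add_le _ _ _ _ _) (add_le_add ?_ le_rfl)
  exact Kfun_add_le _ _ _ _ _

lemma ennreal_le_of_forall_mul {a b : ℝ≥0∞}
    (h : ∀ r : ℝ≥0∞, 1 < r → r ≠ ⊤ → a ≤ r * b) : a ≤ b := by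
  by_cases hbtop : b = ⊤
  · exact hbtop ▸ le_top
  by_cases hb0 : b = 0
  · simpa [hb0] using h 2 one_lt_two (by norm_num)
  apply ENNReal.le_of_forall_pos_le_add
  intro ε hε _
  have hεb : (ε : ℝ≥0∞) / b ≠ 0 := by
    simp [ENNReal.div_eq_zero_iff, hbtop, (by exact_mod_cast hε.ne' : (ε : ℝ≥0∞) ≠ 0)]
  have hr1 : 1 < 1 + (ε : ℝ≥0∞) / b := ENNReal.lt_add_right one_ne_top hεb
  have hrtop : 1 + (ε : ℝ≥0∞) / b ≠ ⊤ := by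
    refine ENNReal.add_ne_top.mpr ⟨one_ne_top, ?_⟩
    simp [ENNReal.div_eq_top, hb0, coe_ne_top]
  calc a ≤ (1 + (ε : ℝ≥0∞) / b) * b := h _ hr1 hrtop
    _ = b + (ε : ℝ≥0∞) / b * b := by rw [add_mul, one_mul]
    _ = b + ε := by rw [ENNReal.div_mul_cancel hb0 hbtop]

lemma ennreal_le_of_forall_cube {a b : ℝ≥0∞}
    (h : ∀ r : ℝ≥0∞, 1 < r → r ≠ ⊤ → a ≤ r * (r * (r * b))) : a ≤ b := by
  apply ennreal_le_of_forall_mul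
  intro ρ h1 htop
  have hρ0 : ρ ≠ 0 := (lt_trans zero_lt_one h1).ne'
  set r := ρ ^ (1/3 : ℝ) with hr
  have hr1 : 1 < r := ENNReal.one_lt_rpow h1 (by norm_num)
  have hrtop : r ≠ ⊤ := ENNReal.rpow_ne_top_of_nonneg (by norm_num) htop
  have hcube : r * (r * (r * b)) = ρ * b := by
    rw [← mul_assoc, ← mul_assoc]
    congr 1
    rw [hr, ← ENNReal.rpow_add _ _ hρ0 htop, ← ENNReal.rpow_add _ _ hρ0 htop]
    norm_num
  exact hcube ▸ h r hr1 hrtop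

lemma eq_zero_of_le_mul {L a : ℝ≥0∞} {ι : Sort*} [Nonempty ι] {g : ι → ℝ≥0∞}
    (ha : a ≠ ⊤) (hg : ⨅ i, g i = 0) (h : ∀ i, L ≤ a * g i) : L = 0 := by
  refine le_antisymm ?_ (zero_le)
  by_cases ha0 : a = 0
  · simpa [ha0] using h (Classical.arbitrary ι)
  apply ENNReal.le_of_forall_pos_le_add
  intro ε hε _
  have hpos : (0 : ℝ≥0∞) < a⁻¹ * ε :=
    ENNReal.mul_pos (ENNReal.inv_ne_zero.mpr ha) (by exact_mod_cast hε.ne')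
  obtain ⟨i, hi⟩ := iInf_lt_iff.mp (hg ▸ hpos)
  calc L ≤ a * g i := h i
    _ ≤ a * (a⁻¹ * ε) := mul_le_mul_right hi.le _
    _ = (a * a⁻¹) * ε := by rw [mul_assoc]
    _ = ε := by rw [ENNReal.mul_inv_cancel ha0 ha, one_mul]
    _ = 0 + ε := (zero_add _).symm

lemma alg3 (n₁ n₂ n₃ k₁ k₂ k₃ : ℝ≥0∞) (h1 : k₁ ≤ n₁) (h2 : k₂ ≤ n₂) :
    n₁*(k₂*k₃) + n₂*(k₁*k₃) + n₃*(k₁*k₂) + 4*(k₁*(k₂*k₃)) ≤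
      3*(n₁*(k₂*k₃) + k₁*(n₂*k₃ + n₃*k₂)) := by
  calc n₁*(k₂*k₃) + n₂*(k₁*k₃) + n₃*(k₁*k₂) + 4*(k₁*(k₂*k₃))
      = n₁*(k₂*k₃) + n₂*(k₁*k₃) + n₃*(k₁*k₂) + (2*(k₁*(k₂*k₃)) + 2*(k₂*(k₁*k₃))) := by ring
    _ ≤ n₁*(k₂*k₃) + n₂*(k₁*k₃) + n₃*(k₁*k₂) + (2*(n₁*(k₂*k₃)) + 2*(n₂*(k₁*k₃))) := by
        gcongr
    _ = 3*(n₁*(k₂*k₃)) + 3*(n₂*(k₁*k₃)) + 1*(n₃*(k₁*k₂)) := by ring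
    _ ≤ 3*(n₁*(k₂*k₃)) + 3*(n₂*(k₁*k₃)) + 3*(n₃*(k₁*k₂)) := by gcongr <;> norm_num
    _ = 3*(n₁*(k₂*k₃) + k₁*(n₂*k₃ + n₃*k₂)) := by ring

lemma algMain (n₁ n₂ n₃ k₁ k₂ k₃ r : ℝ≥0∞) (hr : 1 ≤ r) (h1 : k₁ ≤ n₁) (h2 : k₂ ≤ n₂) :
    (r*k₁)*((r*k₂)*(r*k₃)) + (n₁+r*k₁)*((r*k₂)*(r*k₃)) + (n₂+r*k₂)*((r*k₁)*(r*k₃))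
      + (n₃+r*k₃)*((r*k₁)*(r*k₂))
    ≤ r*(r*(r*(3*(n₁*(k₂*k₃) + k₁*(n₂*k₃ + n₃*k₂))))) := by
  have hrr : r*r ≤ r*r*r := le_mul_of_one_le_right' hr
  calc (r*k₁)*((r*k₂)*(r*k₃)) + (n₁+r*k₁)*((r*k₂)*(r*k₃)) + (n₂+r*k₂)*((r*k₁)*(r*k₃))
        + (n₃+r*k₃)*((r*k₁)*(r*k₂))
      = (r*r)*(n₁*(k₂*k₃) + n₂*(k₁*k₃) + n₃*(k₁*k₂))
        + (r*r*r)*(4*(k₁*(k₂*k₃))) := by ring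
    _ ≤ (r*r*r)*(n₁*(k₂*k₃) + n₂*(k₁*k₃) + n₃*(k₁*k₂))
        + (r*r*r)*(4*(k₁*(k₂*k₃))) := by gcongr
    _ = (r*r*r)*(n₁*(k₂*k₃) + n₂*(k₁*k₃) + n₃*(k₁*k₂) + 4*(k₁*(k₂*k₃))) := by ring
    _ ≤ (r*r*r)*(3*(n₁*(k₂*k₃) + k₁*(n₂*k₃ + n₃*k₂))) :=
        mul_le_mul_right (alg3 n₁ n₂ n₃ k₁ k₂ k₃ h1 h2) _
    _ = r*(r*(r*(3*(n₁*(k₂*k₃) + k₁*(n₂*k₃ + n₃*k₂))))) := by ring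

theorem trilinear_K_functional_bound
    {W : Type*} [AddCommGroup W] [Module ℝ W]
    (X₁ X₂ : ENormC V) (Y₁ Y₂ : ENormC W)
    (hembed : ∃ c : ℝ≥0∞, c ≠ ⊤ ∧ ∀ v, X₁.e v ≤ c * X₂.e v)
    (T : V →ₗ[ℝ] V →ₗ[ℝ] V →ₗ[ℝ] W) (C₀ : ℝ≥0∞) (hC₀ : 0 < C₀) (hC₀top : C₀ ≠ ⊤)
    (hsymm : ∀ a b c : V, T a b c = T b a c ∧ T a b c = T a c b)
    (h₁ : ∀ a₁ a₂ a₃ : V, Y₁.e (T a₁ a₂ a₃) ≤ C₀ * X₁.e a₁ * X₁.e a₂ * X₁.e a₃)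
    (h₂ : ∀ b₁ b₂ b₃ : V, Y₂.e (T b₁ b₂ b₃) ≤
      C₀ * (X₁.e b₁ * X₂.e b₂ * X₂.e b₃ + X₂.e b₁ * X₁.e b₂ * X₂.e b₃ +
        X₂.e b₁ * X₂.e b₂ * X₁.e b₃))
    (h₃ : ∀ a b₂ b₃ : V, interpN Y₁ Y₂ (1 / 2) ⊤ (T a b₂ b₃) ≤
      C₀ * X₁.e a * (X₂.e b₂ * X₁.e b₃ + X₁.e b₂ * X₂.e b₃))
    (θ : ℝ) (hθ : 0 < θ) (hθ1 : θ < 1)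
    (x₁ x₂ x₃ : V)
    (hx₁ : interpN X₁ X₂ θ ⊤ x₁ ≠ ⊤) (hx₂ : interpN X₁ X₂ θ ⊤ x₂ ≠ ⊤)
    (hx₃ : interpN X₁ X₂ θ ⊤ x₃ ≠ ⊤) :
    ∀ t : ℝ≥0∞,
      Kfun Y₁ Y₂ t (T x₁ x₂ x₃) ≤
        3 * C₀ * (X₁.e x₁ * Kfun X₁ X₂ (t ^ (1 / 2 : ℝ)) x₂ * Kfun X₁ X₂ (t ^ (1 / 2 : ℝ)) x₃ +
          Kfun X₁ X₂ (t ^ (1 / 2 : ℝ)) x₁ *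
            (X₁.e x₂ * Kfun X₁ X₂ (t ^ (1 / 2 : ℝ)) x₃ +
              X₁.e x₃ * Kfun X₁ X₂ (t ^ (1 / 2 : ℝ)) x₂)) := by
  obtain ⟨c, hc_top, hc⟩ := hembed
  have expand : ∀ a₁ b₁ a₂ b₂ a₃ b₃ : V,
      T (a₁+b₁) (a₂+b₂) (a₃+b₃) =
        T a₁ a₂ a₃ + T a₁ a₂ b₃ + T a₁ b₂ a₃ + T a₁ b₂ b₃ +
        T b₁ a₂ a₃ + T b₁ a₂ b₃ + T b₁ b₂ a₃ + T b₁ b₂ b₃ := by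
    intro a₁ b₁ a₂ b₂ a₃ b₃
    simp only [map_add, LinearMap.add_apply]
    abel
  have interp_fin : ∀ y : V, interpN X₁ X₂ θ ⊤ y ≠ ⊤ → ∀ σ : ℝ≥0∞, σ ≠ 0 → σ ≠ ⊤ →
      Kfun X₁ X₂ σ y ≠ ⊤ := by
    intro y hy σ hσ0 hσtop hcon
    apply hy
    rw [interpN, if_pos rfl]
    have hpos : 0 < σ.toReal := ENNReal.toReal_pos hσ0 hσtop
    apply eq_top_iff.mpr
    have hval : (fun τ : {τ : ℝ // 0 < τ} =>
        ENNReal.ofReal (τ.1 ^ (-θ)) * Kfun X₁ X₂ (ENNReal.ofReal τ.1) y) ⟨σ.toReal, hpos⟩ = ⊤ := by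
      simp only
      rw [ENNReal.ofReal_toReal hσtop, hcon]
      exact ENNReal.mul_top ((ENNReal.ofReal_pos.mpr (Real.rpow_pos_of_pos hpos _)).ne')
    calc (⊤ : ℝ≥0∞) = _ := hval.symm
      _ ≤ _ := le_iSup (fun τ : {τ : ℝ // 0 < τ} =>
        ENNReal.ofReal (τ.1 ^ (-θ)) * Kfun X₁ X₂ (ENNReal.ofReal τ.1) y) ⟨σ.toReal, hpos⟩
  intro t
  set s : ℝ≥0∞ := t ^ (1 / 2 : ℝ) with hs_def
  rcases eq_or_ne t 0 with ht0 | ht0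
  · have hle : Kfun Y₁ Y₂ t (T x₁ x₂ x₃) ≤ 0 := by
      rw [ht0]
      simpa using Kfun_le_right Y₁ Y₂ 0 (T x₁ x₂ x₃)
    exact le_trans hle (zero_le)
  rcases eq_or_ne t ⊤ with httop | httop
  · -- case t = ⊤
    have hs_top : s = ⊤ := by
      rw [hs_def, httop]; exact ENNReal.top_rpow_of_pos (by norm_num)
    have main_zero : ∀ y₁ y₂ y₃ : V, interpN X₁ X₂ θ ⊤ y₂ ≠ ⊤ → interpN X₁ X₂ θ ⊤ y₃ ≠ ⊤ →
        Kfun X₁ X₂ s y₁ = 0 → Kfun Y₁ Y₂ t (T y₁ y₂ y₃) = 0 := by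
      intro y₁ y₂ y₃ hy₂ hy₃ hy₁
      have h2fin : Kfun X₁ X₂ 1 y₂ ≠ ⊤ := interp_fin y₂ hy₂ 1 one_ne_zero one_ne_top
      have h3fin : Kfun X₁ X₂ 1 y₃ ≠ ⊤ := interp_fin y₃ hy₃ 1 one_ne_zero one_ne_top
      obtain ⟨⟨⟨a₂, b₂⟩, hab₂⟩, hp₂⟩ := iInf_lt_iff.mp
        (show (⨅ p : {p : V × V // p.1 + p.2 = y₂}, (X₁.e p.1.1 + (1:ℝ≥0∞) * X₂.e p.1.2))
            < Kfun X₁ X₂ 1 y₂ + 1 from ENNReal.lt_add_right h2fin one_ne_zero)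
      obtain ⟨⟨⟨a₃, b₃⟩, hab₃⟩, hp₃⟩ := iInf_lt_iff.mp
        (show (⨅ p : {p : V × V // p.1 + p.2 = y₃}, (X₁.e p.1.1 + (1:ℝ≥0∞) * X₂.e p.1.2))
            < Kfun X₁ X₂ 1 y₃ + 1 from ENNReal.lt_add_right h3fin one_ne_zero)
      simp only at hp₂ hp₃
      have hA₂ : X₁.e a₂ ≠ ⊤ := (lt_of_le_of_lt le_self_add hp₂).ne_top
      have hB₂ : X₂.e b₂ ≠ ⊤ := by
        have h := (lt_of_le_of_lt le_add_self hp₂).ne_top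
        rwa [one_mul] at h
      have hA₃ : X₁.e a₃ ≠ ⊤ := (lt_of_le_of_lt le_self_add hp₃).ne_top
      have hB₃ : X₂.e b₃ ≠ ⊤ := by
        have h := (lt_of_le_of_lt le_add_self hp₃).ne_top
        rwa [one_mul] at h
      have hF₂ : X₁.e a₂ + c * X₂.e b₂ ≠ ⊤ :=
        ENNReal.add_ne_top.mpr ⟨hA₂, ENNReal.mul_ne_top hc_top hB₂⟩
      have hF₃ : X₁.e a₃ + c * X₂.e b₃ ≠ ⊤ :=
        ENNReal.add_ne_top.mpr ⟨hA₃, ENNReal.mul_ne_top hc_top hB₃⟩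
      have key : ∀ a₁ b₁ : V, a₁ + b₁ = y₁ →
          Kfun Y₁ Y₂ t (T y₁ y₂ y₃) ≤
            (C₀ * ((X₁.e a₂ + c * X₂.e b₂) * (X₁.e a₃ + c * X₂.e b₃))) *
              (X₁.e a₁ + c * X₂.e b₁) := by
        intro a₁ b₁ hab₁
        have hT : T y₁ y₂ y₃ =
            T a₁ a₂ a₃ + T a₁ a₂ b₃ + T a₁ b₂ a₃ + T a₁ b₂ b₃ +
            T b₁ a₂ a₃ + T b₁ a₂ b₃ + T b₁ b₂ a₃ + T b₁ b₂ b₃ := by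
          rw [← hab₁, ← hab₂, ← hab₃]; exact expand a₁ b₁ a₂ b₂ a₃ b₃
        calc Kfun Y₁ Y₂ t (T y₁ y₂ y₃)
            = Kfun Y₁ Y₂ t (T a₁ a₂ a₃ + T a₁ a₂ b₃ + T a₁ b₂ a₃ + T a₁ b₂ b₃ +
                T b₁ a₂ a₃ + T b₁ a₂ b₃ + T b₁ b₂ a₃ + T b₁ b₂ b₃) := by rw [hT]
          _ ≤ Kfun Y₁ Y₂ t (T a₁ a₂ a₃) + Kfun Y₁ Y₂ t (T a₁ a₂ b₃) +
              Kfun Y₁ Y₂ t (T a₁ b₂ a₃) + Kfun Y₁ Y₂ t (T a₁ b₂ b₃) +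
              Kfun Y₁ Y₂ t (T b₁ a₂ a₃) + Kfun Y₁ Y₂ t (T b₁ a₂ b₃) +
              Kfun Y₁ Y₂ t (T b₁ b₂ a₃) + Kfun Y₁ Y₂ t (T b₁ b₂ b₃) :=
            Kfun_sum8 _ _ _ _ _ _ _ _ _ _ _
          _ ≤ C₀ * X₁.e a₁ * X₁.e a₂ * X₁.e a₃ + C₀ * X₁.e a₁ * X₁.e a₂ * X₁.e b₃ +
              C₀ * X₁.e a₁ * X₁.e b₂ * X₁.e a₃ + C₀ * X₁.e a₁ * X₁.e b₂ * X₁.e b₃ +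
              C₀ * X₁.e b₁ * X₁.e a₂ * X₁.e a₃ + C₀ * X₁.e b₁ * X₁.e a₂ * X₁.e b₃ +
              C₀ * X₁.e b₁ * X₁.e b₂ * X₁.e a₃ + C₀ * X₁.e b₁ * X₁.e b₂ * X₁.e b₃ :=
            add_le_add (add_le_add (add_le_add (add_le_add (add_le_add (add_le_add
              (add_le_add ((Kfun_le_left _ _ _ _).trans (h₁ _ _ _))
                ((Kfun_le_left _ _ _ _).trans (h₁ _ _ _)))
                ((Kfun_le_left _ _ _ _).trans (h₁ _ _ _)))
                ((Kfun_le_left _ _ _ _).trans (h₁ _ _ _)))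
                ((Kfun_le_left _ _ _ _).trans (h₁ _ _ _)))
                ((Kfun_le_left _ _ _ _).trans (h₁ _ _ _)))
                ((Kfun_le_left _ _ _ _).trans (h₁ _ _ _)))
                ((Kfun_le_left _ _ _ _).trans (h₁ _ _ _))
          _ = (C₀ * ((X₁.e a₂ + X₁.e b₂) * (X₁.e a₃ + X₁.e b₃))) *
                (X₁.e a₁ + X₁.e b₁) := by ring
          _ ≤ (C₀ * ((X₁.e a₂ + c * X₂.e b₂) * (X₁.e a₃ + c * X₂.e b₃))) *
                (X₁.e a₁ + c * X₂.e b₁) := by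
              gcongr <;> exact hc _
      refine eq_zero_of_le_mul
        (g := fun p : {p : V × V // p.1 + p.2 = y₁} => X₁.e p.1.1 + c * X₂.e p.1.2)
        (ENNReal.mul_ne_top hC₀top (ENNReal.mul_ne_top hF₂ hF₃)) ?_
        (fun p => key p.1.1 p.1.2 p.2)
      have hcs : c ≤ s := by rw [hs_top]; exact le_top
      have mono : (⨅ p : {p : V × V // p.1 + p.2 = y₁}, (X₁.e p.1.1 + c * X₂.e p.1.2)) ≤
          (⨅ p : {p : V × V // p.1 + p.2 = y₁}, (X₁.e p.1.1 + s * X₂.e p.1.2)) :=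
        iInf_mono fun p => add_le_add_right (mul_le_mul_left hcs _) _
      exact le_antisymm (le_trans mono (le_of_eq hy₁)) (zero_le)
    by_cases hz1 : Kfun X₁ X₂ s x₁ = 0
    · rw [main_zero x₁ x₂ x₃ hx₂ hx₃ hz1]; exact zero_le
    by_cases hz2 : Kfun X₁ X₂ s x₂ = 0
    · have h0 : Kfun Y₁ Y₂ t (T x₁ x₂ x₃) = 0 := by
        rw [(hsymm x₁ x₂ x₃).1]; exact main_zero x₂ x₁ x₃ hx₁ hx₃ hz2
      rw [h0]; exact zero_le
    by_cases hz3 : Kfun X₁ X₂ s x₃ = 0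
    · have h0 : Kfun Y₁ Y₂ t (T x₁ x₂ x₃) = 0 := by
        rw [(hsymm x₁ x₂ x₃).2, (hsymm x₁ x₃ x₂).1]; exact main_zero x₃ x₁ x₂ hx₁ hx₂ hz3
      rw [h0]; exact zero_le
    have hN₁0 : X₁.e x₁ ≠ 0 := fun h =>
      hz1 (le_antisymm (le_trans (Kfun_le_left _ _ _ _) (le_of_eq h)) (zero_le))
    have hN₂0 : X₁.e x₂ ≠ 0 := fun h =>
      hz2 (le_antisymm (le_trans (Kfun_le_left _ _ _ _) (le_of_eq h)) (zero_le))
    have h3C₀ : (3 : ℝ≥0∞) * C₀ ≠ 0 := mul_ne_zero (by norm_num) hC₀.ne'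
    by_cases hk1 : Kfun X₁ X₂ s x₁ = ⊤
    · refine le_top.trans (le_of_eq ?_)
      symm
      have hinner : X₁.e x₂ * Kfun X₁ X₂ s x₃ + X₁.e x₃ * Kfun X₁ X₂ s x₂ ≠ 0 := by
        intro hsum
        exact (mul_ne_zero hN₂0 hz3) (add_eq_zero.mp hsum).1
      rw [hk1, ENNReal.top_mul hinner, add_top, ENNReal.mul_top h3C₀]
    by_cases hk2 : Kfun X₁ X₂ s x₂ = ⊤
    · refine le_top.trans (le_of_eq ?_)
      symm
      rw [hk2, ENNReal.mul_top hN₁0, ENNReal.top_mul hz3, top_add, ENNReal.mul_top h3C₀]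
    by_cases hk3 : Kfun X₁ X₂ s x₃ = ⊤
    · refine le_top.trans (le_of_eq ?_)
      symm
      rw [hk3, ENNReal.mul_top (mul_ne_zero hN₁0 hz2), top_add, ENNReal.mul_top h3C₀]
    -- all Kfun values positive and finite
    apply ennreal_le_of_forall_cube
    intro r hr1 hrtop
    have get : ∀ y : V, Kfun X₁ X₂ s y ≠ 0 → Kfun X₁ X₂ s y ≠ ⊤ →
        ∃ a b : V, a + b = y ∧ X₁.e a ≤ r * Kfun X₁ X₂ s y ∧ X₁.e b = 0 := by
      intro y h0 htop'
      have hlt : Kfun X₁ X₂ s y < r * Kfun X₁ X₂ s y := by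
        conv_lhs => rw [← one_mul (Kfun X₁ X₂ s y)]
        exact ENNReal.mul_lt_mul_left h0 htop' hr1
      obtain ⟨⟨⟨a, b⟩, hab⟩, hp⟩ := iInf_lt_iff.mp
        (show (⨅ p : {p : V × V // p.1 + p.2 = y}, (X₁.e p.1.1 + s * X₂.e p.1.2))
            < r * Kfun X₁ X₂ s y from hlt)
      simp only at hp
      have hB : X₂.e b = 0 := by
        by_contra hB
        have hst : s * X₂.e b = ⊤ := by rw [hs_top]; exact ENNReal.top_mul hB
        rw [hst, add_top] at hp
        exact not_top_lt hp
      refine ⟨a, b, hab, le_of_lt (lt_of_le_of_lt le_self_add hp), ?_⟩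
      have h := hc b
      rw [hB, mul_zero] at h
      exact le_antisymm h (zero_le)
    obtain ⟨a₁, b₁, hab₁, hA₁, hΓ₁⟩ := get x₁ hz1 hk1
    obtain ⟨a₂, b₂, hab₂, hA₂, hΓ₂⟩ := get x₂ hz2 hk2
    obtain ⟨a₃, b₃, hab₃, hA₃, hΓ₃⟩ := get x₃ hz3 hk3
    have hT : T x₁ x₂ x₃ =
        T a₁ a₂ a₃ + T a₁ a₂ b₃ + T a₁ b₂ a₃ + T a₁ b₂ b₃ +
        T b₁ a₂ a₃ + T b₁ a₂ b₃ + T b₁ b₂ a₃ + T b₁ b₂ b₃ := by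
      rw [← hab₁, ← hab₂, ← hab₃]; exact expand a₁ b₁ a₂ b₂ a₃ b₃
    have hfinal : C₀ * (X₁.e a₁ * (X₁.e a₂ * X₁.e a₃)) ≤
        r * (r * (r * (3 * C₀ *
          (X₁.e x₁ * Kfun X₁ X₂ s x₂ * Kfun X₁ X₂ s x₃ +
            Kfun X₁ X₂ s x₁ * (X₁.e x₂ * Kfun X₁ X₂ s x₃ + X₁.e x₃ * Kfun X₁ X₂ s x₂))))) := by
      have hK₁N : Kfun X₁ X₂ s x₁ ≤ X₁.e x₁ := Kfun_le_left _ _ _ _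
      calc C₀ * (X₁.e a₁ * (X₁.e a₂ * X₁.e a₃))
          ≤ C₀ * ((r * Kfun X₁ X₂ s x₁) * ((r * Kfun X₁ X₂ s x₂) * (r * Kfun X₁ X₂ s x₃))) := by
            gcongr
        _ = r * (r * (r * (C₀ * (Kfun X₁ X₂ s x₁ * (Kfun X₁ X₂ s x₂ * Kfun X₁ X₂ s x₃))))) := by
            ring
        _ ≤ r * (r * (r * (3 * C₀ *
            (X₁.e x₁ * Kfun X₁ X₂ s x₂ * Kfun X₁ X₂ s x₃ +
              Kfun X₁ X₂ s x₁ * (X₁.e x₂ * Kfun X₁ X₂ s x₃ + X₁.e x₃ * Kfun X₁ X₂ s x₂))))) := by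
            refine mul_le_mul_right (mul_le_mul_right (mul_le_mul_right ?_ r) r) r
            calc C₀ * (Kfun X₁ X₂ s x₁ * (Kfun X₁ X₂ s x₂ * Kfun X₁ X₂ s x₃))
                ≤ C₀ * (X₁.e x₁ * (Kfun X₁ X₂ s x₂ * Kfun X₁ X₂ s x₃)) := by gcongr
              _ = 1 * (C₀ * (X₁.e x₁ * Kfun X₁ X₂ s x₂ * Kfun X₁ X₂ s x₃)) := by ring
              _ ≤ 3 * (C₀ * (X₁.e x₁ * Kfun X₁ X₂ s x₂ * Kfun X₁ X₂ s x₃ +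
                    Kfun X₁ X₂ s x₁ * (X₁.e x₂ * Kfun X₁ X₂ s x₃ + X₁.e x₃ * Kfun X₁ X₂ s x₂))) :=
                  mul_le_mul' (by norm_num) (mul_le_mul_right le_self_add _)
              _ = 3 * C₀ * (X₁.e x₁ * Kfun X₁ X₂ s x₂ * Kfun X₁ X₂ s x₃ +
                    Kfun X₁ X₂ s x₁ * (X₁.e x₂ * Kfun X₁ X₂ s x₃ + X₁.e x₃ * Kfun X₁ X₂ s x₂)) := by
                  ring
    calc Kfun Y₁ Y₂ t (T x₁ x₂ x₃)
        = Kfun Y₁ Y₂ t (T a₁ a₂ a₃ + T a₁ a₂ b₃ + T a₁ b₂ a₃ + T a₁ b₂ b₃ +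
            T b₁ a₂ a₃ + T b₁ a₂ b₃ + T b₁ b₂ a₃ + T b₁ b₂ b₃) := by rw [hT]
      _ ≤ Kfun Y₁ Y₂ t (T a₁ a₂ a₃) + Kfun Y₁ Y₂ t (T a₁ a₂ b₃) +
          Kfun Y₁ Y₂ t (T a₁ b₂ a₃) + Kfun Y₁ Y₂ t (T a₁ b₂ b₃) +
          Kfun Y₁ Y₂ t (T b₁ a₂ a₃) + Kfun Y₁ Y₂ t (T b₁ a₂ b₃) +
          Kfun Y₁ Y₂ t (T b₁ b₂ a₃) + Kfun Y₁ Y₂ t (T b₁ b₂ b₃) :=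
        Kfun_sum8 _ _ _ _ _ _ _ _ _ _ _
      _ ≤ C₀ * X₁.e a₁ * X₁.e a₂ * X₁.e a₃ + C₀ * X₁.e a₁ * X₁.e a₂ * X₁.e b₃ +
          C₀ * X₁.e a₁ * X₁.e b₂ * X₁.e a₃ + C₀ * X₁.e a₁ * X₁.e b₂ * X₁.e b₃ +
          C₀ * X₁.e b₁ * X₁.e a₂ * X₁.e a₃ + C₀ * X₁.e b₁ * X₁.e a₂ * X₁.e b₃ +
          C₀ * X₁.e b₁ * X₁.e b₂ * X₁.e a₃ + C₀ * X₁.e b₁ * X₁.e b₂ * X₁.e b₃ :=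
        add_le_add (add_le_add (add_le_add (add_le_add (add_le_add (add_le_add
          (add_le_add ((Kfun_le_left _ _ _ _).trans (h₁ _ _ _))
            ((Kfun_le_left _ _ _ _).trans (h₁ _ _ _)))
            ((Kfun_le_left _ _ _ _).trans (h₁ _ _ _)))
            ((Kfun_le_left _ _ _ _).trans (h₁ _ _ _)))
            ((Kfun_le_left _ _ _ _).trans (h₁ _ _ _)))
            ((Kfun_le_left _ _ _ _).trans (h₁ _ _ _)))
            ((Kfun_le_left _ _ _ _).trans (h₁ _ _ _)))
            ((Kfun_le_left _ _ _ _).trans (h₁ _ _ _))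
      _ = C₀ * ((X₁.e a₁ + X₁.e b₁) * ((X₁.e a₂ + X₁.e b₂) * (X₁.e a₃ + X₁.e b₃))) := by ring
      _ = C₀ * (X₁.e a₁ * (X₁.e a₂ * X₁.e a₃)) := by rw [hΓ₁, hΓ₂, hΓ₃]; ring
      _ ≤ r * (r * (r * (3 * C₀ *
          (X₁.e x₁ * Kfun X₁ X₂ s x₂ * Kfun X₁ X₂ s x₃ +
            Kfun X₁ X₂ s x₁ * (X₁.e x₂ * Kfun X₁ X₂ s x₃ + X₁.e x₃ * Kfun X₁ X₂ s x₂))))) :=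
        hfinal
  · -- main case: 0 < t < ⊤
    have hτpos : 0 < t.toReal := ENNReal.toReal_pos ht0 httop
    have hs0 : s ≠ 0 := by
      rw [hs_def]
      simp [ENNReal.rpow_eq_zero_iff, ht0, httop]
    have hstop : s ≠ ⊤ := by
      rw [hs_def]
      exact ENNReal.rpow_ne_top_of_nonneg (by norm_num) httop
    have hss : s * s = t := by
      rw [hs_def, ← ENNReal.rpow_add _ _ ht0 httop]
      norm_num
    have h3t : ∀ a b₂ b₃ : V, Kfun Y₁ Y₂ t (T a b₂ b₃) ≤
        s * (C₀ * X₁.e a * (X₂.e b₂ * X₁.e b₃ + X₁.e b₂ * X₂.e b₃)) := by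
      intro a b₂ b₃
      have hsup := h₃ a b₂ b₃
      rw [interpN, if_pos rfl] at hsup
      have hterm := le_trans (le_iSup (fun τ : {τ : ℝ // 0 < τ} =>
        ENNReal.ofReal (τ.1 ^ (-(1/2) : ℝ)) * Kfun Y₁ Y₂ (ENNReal.ofReal τ.1) (T a b₂ b₃))
        ⟨t.toReal, hτpos⟩) hsup
      simp only at hterm
      rw [ENNReal.ofReal_toReal httop] at hterm
      have hcoef : ENNReal.ofReal (t.toReal ^ (1/2 : ℝ)) *
          ENNReal.ofReal (t.toReal ^ (-(1/2) : ℝ)) = 1 := by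
        rw [← ENNReal.ofReal_mul (le_of_lt (Real.rpow_pos_of_pos hτpos _)),
          ← Real.rpow_add hτpos]
        norm_num
      have hsval : ENNReal.ofReal (t.toReal ^ (1/2 : ℝ)) = s := by
        rw [← ENNReal.ofReal_rpow_of_pos hτpos, ENNReal.ofReal_toReal httop, hs_def]
      calc Kfun Y₁ Y₂ t (T a b₂ b₃) = 1 * Kfun Y₁ Y₂ t (T a b₂ b₃) := (one_mul _).symm
        _ = ENNReal.ofReal (t.toReal ^ (1/2:ℝ)) *
            (ENNReal.ofReal (t.toReal ^ (-(1/2):ℝ)) * Kfun Y₁ Y₂ t (T a b₂ b₃)) := by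
            rw [← mul_assoc, hcoef]
        _ ≤ ENNReal.ofReal (t.toReal ^ (1/2:ℝ)) *
            (C₀ * X₁.e a * (X₂.e b₂ * X₁.e b₃ + X₁.e b₂ * X₂.e b₃)) :=
            mul_le_mul_right hterm _
        _ = s * (C₀ * X₁.e a * (X₂.e b₂ * X₁.e b₃ + X₁.e b₂ * X₂.e b₃)) := by rw [hsval]
    have star : ∀ y₁ y₂ y₃ a₁ b₁ a₂ b₂ a₃ b₃ : V,
        a₁ + b₁ = y₁ → a₂ + b₂ = y₂ → a₃ + b₃ = y₃ →
        Kfun Y₁ Y₂ t (T y₁ y₂ y₃) ≤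
          C₀ * (X₁.e a₁ * (X₁.e a₂ * X₁.e a₃)
            + X₁.e b₁ * ((X₁.e a₂ + s * X₂.e b₂) * (X₁.e a₃ + s * X₂.e b₃))
            + X₁.e b₂ * ((X₁.e a₁ + s * X₂.e b₁) * (X₁.e a₃ + s * X₂.e b₃))
            + X₁.e b₃ * ((X₁.e a₁ + s * X₂.e b₁) * (X₁.e a₂ + s * X₂.e b₂))) := by
      intro y₁ y₂ y₃ a₁ b₁ a₂ b₂ a₃ b₃ hab₁ hab₂ hab₃
      have hT : T y₁ y₂ y₃ =
          T a₁ a₂ a₃ + T a₁ a₂ b₃ + T a₁ b₂ a₃ + T a₁ b₂ b₃ +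
          T b₁ a₂ a₃ + T b₁ a₂ b₃ + T b₁ b₂ a₃ + T b₁ b₂ b₃ := by
        rw [← hab₁, ← hab₂, ← hab₃]; exact expand a₁ b₁ a₂ b₂ a₃ b₃
      have k6 : Kfun Y₁ Y₂ t (T b₁ a₂ b₃) ≤
          s * (C₀ * X₁.e a₂ * (X₂.e b₁ * X₁.e b₃ + X₁.e b₁ * X₂.e b₃)) := by
        rw [(hsymm b₁ a₂ b₃).1]; exact h3t _ _ _
      have k7 : Kfun Y₁ Y₂ t (T b₁ b₂ a₃) ≤
          s * (C₀ * X₁.e a₃ * (X₂.e b₁ * X₁.e b₂ + X₁.e b₁ * X₂.e b₂)) := by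
        rw [(hsymm b₁ b₂ a₃).2, (hsymm b₁ a₃ b₂).1]; exact h3t _ _ _
      have k8 : Kfun Y₁ Y₂ t (T b₁ b₂ b₃) ≤
          (s * s) * (C₀ * (X₁.e b₁ * X₂.e b₂ * X₂.e b₃ + X₂.e b₁ * X₁.e b₂ * X₂.e b₃ +
            X₂.e b₁ * X₂.e b₂ * X₁.e b₃)) := by
        rw [hss]; exact (Kfun_le_right _ _ _ _).trans (mul_le_mul_right (h₂ _ _ _) t)
      calc Kfun Y₁ Y₂ t (T y₁ y₂ y₃)
          = Kfun Y₁ Y₂ t (T a₁ a₂ a₃ + T a₁ a₂ b₃ + T a₁ b₂ a₃ + T a₁ b₂ b₃ +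
              T b₁ a₂ a₃ + T b₁ a₂ b₃ + T b₁ b₂ a₃ + T b₁ b₂ b₃) := by rw [hT]
        _ ≤ Kfun Y₁ Y₂ t (T a₁ a₂ a₃) + Kfun Y₁ Y₂ t (T a₁ a₂ b₃) +
            Kfun Y₁ Y₂ t (T a₁ b₂ a₃) + Kfun Y₁ Y₂ t (T a₁ b₂ b₃) +
            Kfun Y₁ Y₂ t (T b₁ a₂ a₃) + Kfun Y₁ Y₂ t (T b₁ a₂ b₃) +
            Kfun Y₁ Y₂ t (T b₁ b₂ a₃) + Kfun Y₁ Y₂ t (T b₁ b₂ b₃) :=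
          Kfun_sum8 _ _ _ _ _ _ _ _ _ _ _
        _ ≤ C₀ * X₁.e a₁ * X₁.e a₂ * X₁.e a₃ + C₀ * X₁.e a₁ * X₁.e a₂ * X₁.e b₃ +
            C₀ * X₁.e a₁ * X₁.e b₂ * X₁.e a₃ +
            s * (C₀ * X₁.e a₁ * (X₂.e b₂ * X₁.e b₃ + X₁.e b₂ * X₂.e b₃)) +
            C₀ * X₁.e b₁ * X₁.e a₂ * X₁.e a₃ +
            s * (C₀ * X₁.e a₂ * (X₂.e b₁ * X₁.e b₃ + X₁.e b₁ * X₂.e b₃)) +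
            s * (C₀ * X₁.e a₃ * (X₂.e b₁ * X₁.e b₂ + X₁.e b₁ * X₂.e b₂)) +
            (s * s) * (C₀ * (X₁.e b₁ * X₂.e b₂ * X₂.e b₃ + X₂.e b₁ * X₁.e b₂ * X₂.e b₃ +
              X₂.e b₁ * X₂.e b₂ * X₁.e b₃)) :=
          add_le_add (add_le_add (add_le_add (add_le_add (add_le_add (add_le_add
            (add_le_add ((Kfun_le_left _ _ _ _).trans (h₁ _ _ _))
              ((Kfun_le_left _ _ _ _).trans (h₁ _ _ _)))
              ((Kfun_le_left _ _ _ _).trans (h₁ _ _ _)))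
              (h3t _ _ _))
              ((Kfun_le_left _ _ _ _).trans (h₁ _ _ _)))
              k6)
              k7)
              k8
        _ = C₀ * (X₁.e a₁ * (X₁.e a₂ * X₁.e a₃)
            + X₁.e b₁ * ((X₁.e a₂ + s * X₂.e b₂) * (X₁.e a₃ + s * X₂.e b₃))
            + X₁.e b₂ * ((X₁.e a₁ + s * X₂.e b₁) * (X₁.e a₃ + s * X₂.e b₃))
            + X₁.e b₃ * ((X₁.e a₁ + s * X₂.e b₁) * (X₁.e a₂ + s * X₂.e b₂))) := by ring
    have hsinv : s⁻¹ ≠ ⊤ := ENNReal.inv_ne_top.mpr hs0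
    have hBle : ∀ a b : V, X₁.e b ≤ c * (s⁻¹ * (X₁.e a + s * X₂.e b)) := by
      intro a b
      refine le_trans (hc b) (mul_le_mul_right ?_ c)
      calc X₂.e b = s⁻¹ * (s * X₂.e b) := by
            rw [← mul_assoc, ENNReal.inv_mul_cancel hs0 hstop, one_mul]
        _ ≤ s⁻¹ * (X₁.e a + s * X₂.e b) := mul_le_mul_right le_add_self _
    have starJ : ∀ y₁ y₂ y₃ a₁ b₁ a₂ b₂ a₃ b₃ : V,
        a₁ + b₁ = y₁ → a₂ + b₂ = y₂ → a₃ + b₃ = y₃ →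
        Kfun Y₁ Y₂ t (T y₁ y₂ y₃) ≤
          (C₀ * (1 + c * s⁻¹ + c * s⁻¹ + c * s⁻¹)) *
            ((X₁.e a₁ + s * X₂.e b₁) * ((X₁.e a₂ + s * X₂.e b₂) * (X₁.e a₃ + s * X₂.e b₃))) := by
      intro y₁ y₂ y₃ a₁ b₁ a₂ b₂ a₃ b₃ hab₁ hab₂ hab₃
      refine le_trans (star y₁ y₂ y₃ a₁ b₁ a₂ b₂ a₃ b₃ hab₁ hab₂ hab₃) ?_
      calc C₀ * (X₁.e a₁ * (X₁.e a₂ * X₁.e a₃)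
            + X₁.e b₁ * ((X₁.e a₂ + s * X₂.e b₂) * (X₁.e a₃ + s * X₂.e b₃))
            + X₁.e b₂ * ((X₁.e a₁ + s * X₂.e b₁) * (X₁.e a₃ + s * X₂.e b₃))
            + X₁.e b₃ * ((X₁.e a₁ + s * X₂.e b₁) * (X₁.e a₂ + s * X₂.e b₂)))
          ≤ C₀ * ((X₁.e a₁ + s * X₂.e b₁) * ((X₁.e a₂ + s * X₂.e b₂) * (X₁.e a₃ + s * X₂.e b₃))
            + (c * (s⁻¹ * (X₁.e a₁ + s * X₂.e b₁))) *
              ((X₁.e a₂ + s * X₂.e b₂) * (X₁.e a₃ + s * X₂.e b₃))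
            + (c * (s⁻¹ * (X₁.e a₂ + s * X₂.e b₂))) *
              ((X₁.e a₁ + s * X₂.e b₁) * (X₁.e a₃ + s * X₂.e b₃))
            + (c * (s⁻¹ * (X₁.e a₃ + s * X₂.e b₃))) *
              ((X₁.e a₁ + s * X₂.e b₁) * (X₁.e a₂ + s * X₂.e b₂))) := by
            gcongr <;> first | exact le_self_add | exact hBle _ _
        _ = (C₀ * (1 + c * s⁻¹ + c * s⁻¹ + c * s⁻¹)) *
            ((X₁.e a₁ + s * X₂.e b₁) * ((X₁.e a₂ + s * X₂.e b₂) * (X₁.e a₃ + s * X₂.e b₃))) := by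
            ring
    have hk1top : Kfun X₁ X₂ s x₁ ≠ ⊤ := interp_fin x₁ hx₁ s hs0 hstop
    have hk2top : Kfun X₁ X₂ s x₂ ≠ ⊤ := interp_fin x₂ hx₂ s hs0 hstop
    have hk3top : Kfun X₁ X₂ s x₃ ≠ ⊤ := interp_fin x₃ hx₃ s hs0 hstop
    have hcu : c * s⁻¹ ≠ ⊤ := ENNReal.mul_ne_top hc_top hsinv
    have hCtop : C₀ * (1 + c * s⁻¹ + c * s⁻¹ + c * s⁻¹) ≠ ⊤ :=
      ENNReal.mul_ne_top hC₀top (ENNReal.add_ne_top.mpr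
        ⟨ENNReal.add_ne_top.mpr ⟨ENNReal.add_ne_top.mpr ⟨one_ne_top, hcu⟩, hcu⟩, hcu⟩)
    have main_zero : ∀ y₁ y₂ y₃ : V, interpN X₁ X₂ θ ⊤ y₂ ≠ ⊤ → interpN X₁ X₂ θ ⊤ y₃ ≠ ⊤ →
        Kfun X₁ X₂ s y₁ = 0 → Kfun Y₁ Y₂ t (T y₁ y₂ y₃) = 0 := by
      intro y₁ y₂ y₃ hy₂ hy₃ hy₁
      have h2fin : Kfun X₁ X₂ s y₂ ≠ ⊤ := interp_fin y₂ hy₂ s hs0 hstop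
      have h3fin : Kfun X₁ X₂ s y₃ ≠ ⊤ := interp_fin y₃ hy₃ s hs0 hstop
      obtain ⟨⟨⟨a₂, b₂⟩, hab₂⟩, hp₂⟩ := iInf_lt_iff.mp
        (show (⨅ p : {p : V × V // p.1 + p.2 = y₂}, (X₁.e p.1.1 + s * X₂.e p.1.2))
            < Kfun X₁ X₂ s y₂ + 1 from ENNReal.lt_add_right h2fin one_ne_zero)
      obtain ⟨⟨⟨a₃, b₃⟩, hab₃⟩, hp₃⟩ := iInf_lt_iff.mp
        (show (⨅ p : {p : V × V // p.1 + p.2 = y₃}, (X₁.e p.1.1 + s * X₂.e p.1.2))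
            < Kfun X₁ X₂ s y₃ + 1 from ENNReal.lt_add_right h3fin one_ne_zero)
      simp only at hp₂ hp₃
      have hJ₂top : X₁.e a₂ + s * X₂.e b₂ ≠ ⊤ := hp₂.ne_top
      have hJ₃top : X₁.e a₃ + s * X₂.e b₃ ≠ ⊤ := hp₃.ne_top
      refine eq_zero_of_le_mul
        (a := (C₀ * (1 + c * s⁻¹ + c * s⁻¹ + c * s⁻¹)) *
          ((X₁.e a₂ + s * X₂.e b₂) * (X₁.e a₃ + s * X₂.e b₃)))
        (g := fun p : {p : V × V // p.1 + p.2 = y₁} => X₁.e p.1.1 + s * X₂.e p.1.2)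
        (ENNReal.mul_ne_top hCtop (ENNReal.mul_ne_top hJ₂top hJ₃top)) hy₁ ?_
      intro p
      refine le_trans (starJ y₁ y₂ y₃ p.1.1 p.1.2 a₂ b₂ a₃ b₃ p.2 hab₂ hab₃) (le_of_eq ?_)
      ring
    by_cases hz1 : Kfun X₁ X₂ s x₁ = 0
    · rw [main_zero x₁ x₂ x₃ hx₂ hx₃ hz1]; exact zero_le
    by_cases hz2 : Kfun X₁ X₂ s x₂ = 0
    · have h0 : Kfun Y₁ Y₂ t (T x₁ x₂ x₃) = 0 := by
        rw [(hsymm x₁ x₂ x₃).1]; exact main_zero x₂ x₁ x₃ hx₁ hx₃ hz2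
      rw [h0]; exact zero_le
    by_cases hz3 : Kfun X₁ X₂ s x₃ = 0
    · have h0 : Kfun Y₁ Y₂ t (T x₁ x₂ x₃) = 0 := by
        rw [(hsymm x₁ x₂ x₃).2, (hsymm x₁ x₃ x₂).1]; exact main_zero x₃ x₁ x₂ hx₁ hx₂ hz3
      rw [h0]; exact zero_le
    -- positive finite case
    apply ennreal_le_of_forall_cube
    intro r hr1 hrtop
    have get : ∀ y : V, Kfun X₁ X₂ s y ≠ 0 → Kfun X₁ X₂ s y ≠ ⊤ →
        ∃ a b : V, a + b = y ∧ X₁.e a + s * X₂.e b ≤ r * Kfun X₁ X₂ s y := by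
      intro y h0 htop'
      have hlt : Kfun X₁ X₂ s y < r * Kfun X₁ X₂ s y := by
        conv_lhs => rw [← one_mul (Kfun X₁ X₂ s y)]
        exact ENNReal.mul_lt_mul_left h0 htop' hr1
      obtain ⟨⟨⟨a, b⟩, hab⟩, hp⟩ := iInf_lt_iff.mp
        (show (⨅ p : {p : V × V // p.1 + p.2 = y}, (X₁.e p.1.1 + s * X₂.e p.1.2))
            < r * Kfun X₁ X₂ s y from hlt)
      simp only at hp
      exact ⟨a, b, hab, hp.le⟩
    obtain ⟨a₁, b₁, hab₁, hJ₁⟩ := get x₁ hz1 hk1top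
    obtain ⟨a₂, b₂, hab₂, hJ₂⟩ := get x₂ hz2 hk2top
    obtain ⟨a₃, b₃, hab₃, hJ₃⟩ := get x₃ hz3 hk3top
    have hΓ₁ : X₁.e b₁ ≤ X₁.e x₁ + (X₁.e a₁ + s * X₂.e b₁) :=
      le_trans (e_sub_bound X₁ hab₁) (add_le_add_right le_self_add _)
    have hΓ₂ : X₁.e b₂ ≤ X₁.e x₂ + (X₁.e a₂ + s * X₂.e b₂) :=
      le_trans (e_sub_bound X₁ hab₂) (add_le_add_right le_self_add _)
    have hΓ₃ : X₁.e b₃ ≤ X₁.e x₃ + (X₁.e a₃ + s * X₂.e b₃) :=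
      le_trans (e_sub_bound X₁ hab₃) (add_le_add_right le_self_add _)
    calc Kfun Y₁ Y₂ t (T x₁ x₂ x₃)
        ≤ C₀ * (X₁.e a₁ * (X₁.e a₂ * X₁.e a₃)
          + X₁.e b₁ * ((X₁.e a₂ + s * X₂.e b₂) * (X₁.e a₃ + s * X₂.e b₃))
          + X₁.e b₂ * ((X₁.e a₁ + s * X₂.e b₁) * (X₁.e a₃ + s * X₂.e b₃))
          + X₁.e b₃ * ((X₁.e a₁ + s * X₂.e b₁) * (X₁.e a₂ + s * X₂.e b₂))) :=
        star x₁ x₂ x₃ a₁ b₁ a₂ b₂ a₃ b₃ hab₁ hab₂ hab₃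
      _ ≤ C₀ * ((X₁.e a₁ + s * X₂.e b₁) * ((X₁.e a₂ + s * X₂.e b₂) * (X₁.e a₃ + s * X₂.e b₃))
          + (X₁.e x₁ + (X₁.e a₁ + s * X₂.e b₁)) *
            ((X₁.e a₂ + s * X₂.e b₂) * (X₁.e a₃ + s * X₂.e b₃))
          + (X₁.e x₂ + (X₁.e a₂ + s * X₂.e b₂)) *
            ((X₁.e a₁ + s * X₂.e b₁) * (X₁.e a₃ + s * X₂.e b₃))
          + (X₁.e x₃ + (X₁.e a₃ + s * X₂.e b₃)) *
            ((X₁.e a₁ + s * X₂.e b₁) * (X₁.e a₂ + s * X₂.e b₂))) := by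
          gcongr <;> first | exact le_self_add | exact hΓ₁ | exact hΓ₂ | exact hΓ₃
      _ ≤ C₀ * ((r * Kfun X₁ X₂ s x₁) * ((r * Kfun X₁ X₂ s x₂) * (r * Kfun X₁ X₂ s x₃))
          + (X₁.e x₁ + r * Kfun X₁ X₂ s x₁) * ((r * Kfun X₁ X₂ s x₂) * (r * Kfun X₁ X₂ s x₃))
          + (X₁.e x₂ + r * Kfun X₁ X₂ s x₂) * ((r * Kfun X₁ X₂ s x₁) * (r * Kfun X₁ X₂ s x₃))
          + (X₁.e x₃ + r * Kfun X₁ X₂ s x₃) * ((r * Kfun X₁ X₂ s x₁) * (r * Kfun X₁ X₂ s x₂))) := by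
          gcongr <;> first | exact hJ₁ | exact hJ₂ | exact hJ₃
      _ ≤ C₀ * (r * (r * (r * (3 * (X₁.e x₁ * (Kfun X₁ X₂ s x₂ * Kfun X₁ X₂ s x₃) +
            Kfun X₁ X₂ s x₁ * (X₁.e x₂ * Kfun X₁ X₂ s x₃ + X₁.e x₃ * Kfun X₁ X₂ s x₂)))))) :=
          mul_le_mul_right (algMain (X₁.e x₁) (X₁.e x₂) (X₁.e x₃)
            (Kfun X₁ X₂ s x₁) (Kfun X₁ X₂ s x₂) (Kfun X₁ X₂ s x₃) r hr1.le
            (Kfun_le_left _ _ _ _) (Kfun_le_left _ _ _ _)) C₀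
      _ = r * (r * (r * (3 * C₀ *
          (X₁.e x₁ * Kfun X₁ X₂ s x₂ * Kfun X₁ X₂ s x₃ +
            Kfun X₁ X₂ s x₁ * (X₁.e x₂ * Kfun X₁ X₂ s x₃ + X₁.e x₃ * Kfun X₁ X₂ s x₂))))) := by
          ring
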